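/- The area of the plane region bounded by a 3-bulb of radius r — i.e., the region enclosed by the closed curve formed by three convex quarter-circles of radius r and the arcs completing it as in the square Tangle construction — equals 4r², the area of a square of side length 2r. -/
import Mathlib


open MeasureTheory

/-- The open disk of radius `r` centered at `(a, b)` in the plane. -/
def diskAt (a b r : ℝ) : Set (ℝ × ℝ) :=
  {p : ℝ × ℝ | (p.1 - a) ^ 2 + (p.2 - b) ^ 2 < r ^ 2}

/-- The region enclosed by a 3-bulb of radius `r`: it is bounded by the three
convex quarter-circles of the circle centered at `(r, r)` together with the
concave quarter-circle arcs of the circles centered at `(-r, r)`, `(-r, -r)`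
and `(r, -r)`; concretely, it is the disk centered at `(r, r)` together with
the part of the square `[-r, r] × [-r, r]` lying outside the three other
disks. -/
def threeBulbRegion (r : ℝ) : Set (ℝ × ℝ) :=
  diskAt r r r ∪
    ((Set.Icc (-r) r ×ˢ Set.Icc (-r) r) \
      (diskAt (-r) r r ∪ diskAt (-r) (-r) r ∪ diskAt r (-r) r))

lemma measurableSet_diskAt (a b r : ℝ) : MeasurableSet (diskAt a b r) := by
  apply measurableSet_lt
  · fun_prop
  · fun_prop

lemma volume_vline (a : ℝ) : volume {p : ℝ × ℝ | p.1 = a} = 0 := by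
  have : {p : ℝ × ℝ | p.1 = a} = {a} ×ˢ (Set.univ : Set ℝ) := by
    ext ⟨x, y⟩; simp [eq_comm]
  rw [this, Measure.volume_eq_prod, Measure.prod_prod]; simp

lemma volume_hline (b : ℝ) : volume {p : ℝ × ℝ | p.2 = b} = 0 := by
  have : {p : ℝ × ℝ | p.2 = b} = (Set.univ : Set ℝ) ×ˢ {b} := by
    ext ⟨x, y⟩; simp [eq_comm]
  rw [this, Measure.volume_eq_prod, Measure.prod_prod]; simp

lemma translate_eq (v : ℝ × ℝ) (A B : Set (ℝ × ℝ))
    (h : (fun p => v + p) ⁻¹' A = B) : volume A = volume B := by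
  rw [← h, measure_preimage_add]

/-- The area of the region bounded by a 3-bulb of radius `r` equals `4r²`,
the area of a square of side length `2r`. -/
theorem area_three_bulb (r : ℝ) (hr : 0 < r) :
    volume (threeBulbRegion r) = ENNReal.ofReal (4 * r ^ 2) := by
  set S : Set (ℝ × ℝ) := Set.Icc (-r) r ×ˢ Set.Icc (-r) r with hS
  set T1 : Set (ℝ × ℝ) := Set.Icc r (3*r) ×ˢ Set.Icc (-r) r with hT1
  set T2 : Set (ℝ × ℝ) := Set.Icc r (3*r) ×ˢ Set.Icc r (3*r) with hT2
  set T3 : Set (ℝ × ℝ) := Set.Icc (-r) r ×ˢ Set.Icc r (3*r) with hT3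
  set U : Set (ℝ × ℝ) := diskAt (-r) r r ∪ diskAt (-r) (-r) r ∪ diskAt r (-r) r with hU
  -- measurability
  have mS : MeasurableSet S := (measurableSet_Icc.prod measurableSet_Icc)
  have mT1 : MeasurableSet T1 := (measurableSet_Icc.prod measurableSet_Icc)
  have mT2 : MeasurableSet T2 := (measurableSet_Icc.prod measurableSet_Icc)
  have mT3 : MeasurableSet T3 := (measurableSet_Icc.prod measurableSet_Icc)
  have mD0 := measurableSet_diskAt r r r
  have mD1 := measurableSet_diskAt (-r) r r
  have mD2 := measurableSet_diskAt (-r) (-r) r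
  have mD3 := measurableSet_diskAt r (-r) r
  have mU : MeasurableSet U := (mD1.union mD2).union mD3
  -- the square has volume 4 r^2
  have hvolS : volume S = ENNReal.ofReal (4 * r ^ 2) := by
    rw [hS, Measure.volume_eq_prod, Measure.prod_prod, Real.volume_Icc,
      ← ENNReal.ofReal_mul (by linarith)]
    congr 1; ring
  -- disjointness of disks
  have disj : ∀ a b c d : ℝ, (a - c) ^ 2 + (b - d) ^ 2 ≥ 4 * r ^ 2 →
      Disjoint (diskAt a b r) (diskAt c d r) := by
    intro a b c d h
    rw [Set.disjoint_left]
    rintro ⟨x, y⟩ h1 h2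
    simp only [diskAt, Set.mem_setOf_eq] at h1 h2
    nlinarith [sq_nonneg (x - a + (x - c)), sq_nonneg (y - b + (y - d))]
  have hd01 : Disjoint (diskAt r r r) (diskAt (-r) r r) := disj _ _ _ _ (by nlinarith)
  have hd02 : Disjoint (diskAt r r r) (diskAt (-r) (-r) r) := disj _ _ _ _ (by nlinarith)
  have hd03 : Disjoint (diskAt r r r) (diskAt r (-r) r) := disj _ _ _ _ (by nlinarith)
  have hd12 : Disjoint (diskAt (-r) r r) (diskAt (-r) (-r) r) := disj _ _ _ _ (by nlinarith)
  have hd13 : Disjoint (diskAt (-r) r r) (diskAt r (-r) r) := disj _ _ _ _ (by nlinarith)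
  have hd23 : Disjoint (diskAt (-r) (-r) r) (diskAt r (-r) r) := disj _ _ _ _ (by nlinarith)
  -- translations: the corner pieces match the quarters of D0
  have ht1 : volume (S ∩ diskAt (-r) r r) = volume (diskAt r r r ∩ T1) := by
    apply translate_eq (-(2*r), 0)
    ext ⟨x, y⟩
    simp only [Set.mem_preimage, Prod.mk_add_mk, zero_add, Set.mem_inter_iff, Set.mem_prod,
      Set.mem_Icc, diskAt, Set.mem_setOf_eq, hS, hT1]
    constructor
    · rintro ⟨⟨⟨a1, a2⟩, a3, a4⟩, a5⟩
      exact ⟨by nlinarith, ⟨by linarith, by linarith⟩, a3, a4⟩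
    · rintro ⟨a5, ⟨a1, a2⟩, a3, a4⟩
      exact ⟨⟨⟨by linarith, by linarith⟩, a3, a4⟩, by nlinarith⟩
  have ht2 : volume (S ∩ diskAt (-r) (-r) r) = volume (diskAt r r r ∩ T2) := by
    apply translate_eq (-(2*r), -(2*r))
    ext ⟨x, y⟩
    simp only [Set.mem_preimage, Prod.mk_add_mk, zero_add, Set.mem_inter_iff, Set.mem_prod,
      Set.mem_Icc, diskAt, Set.mem_setOf_eq, hS, hT2]
    constructor
    · rintro ⟨⟨⟨a1, a2⟩, a3, a4⟩, a5⟩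
      exact ⟨by nlinarith, ⟨by linarith, by linarith⟩, by linarith, by linarith⟩
    · rintro ⟨a5, ⟨a1, a2⟩, a3, a4⟩
      exact ⟨⟨⟨by linarith, by linarith⟩, by linarith, by linarith⟩, by nlinarith⟩
  have ht3 : volume (S ∩ diskAt r (-r) r) = volume (diskAt r r r ∩ T3) := by
    apply translate_eq (0, -(2*r))
    ext ⟨x, y⟩
    simp only [Set.mem_preimage, Prod.mk_add_mk, zero_add, Set.mem_inter_iff, Set.mem_prod,
      Set.mem_Icc, diskAt, Set.mem_setOf_eq, hS, hT3]
    constructor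
    · rintro ⟨⟨⟨a1, a2⟩, a3, a4⟩, a5⟩
      exact ⟨by nlinarith, ⟨a1, a2⟩, by linarith, by linarith⟩
    · rintro ⟨a5, ⟨a1, a2⟩, a3, a4⟩
      exact ⟨⟨⟨a1, a2⟩, by linarith, by linarith⟩, by nlinarith⟩
  -- D0 is covered by the four squares
  have hcov : diskAt r r r ⊆ S ∪ T1 ∪ T2 ∪ T3 := by
    rintro ⟨x, y⟩ hp
    simp only [diskAt, Set.mem_setOf_eq] at hp
    have hx1 : -r ≤ x := by nlinarith
    have hx2 : x ≤ 3*r := by nlinarith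
    have hy1 : -r ≤ y := by nlinarith
    have hy2 : y ≤ 3*r := by nlinarith
    rcases le_total x r with hx | hx <;> rcases le_total y r with hy | hy
    · exact Or.inl (Or.inl (Or.inl ⟨⟨hx1, hx⟩, hy1, hy⟩))
    · exact Or.inr ⟨⟨hx1, hx⟩, hy, hy2⟩
    · exact Or.inl (Or.inl (Or.inr ⟨⟨hx, hx2⟩, hy1, hy⟩))
    · exact Or.inl (Or.inr ⟨⟨hx, hx2⟩, hy, hy2⟩)
  -- null overlaps
  have hlines : volume ({p : ℝ × ℝ | p.1 = r} ∪ {p : ℝ × ℝ | p.2 = r}) = 0 :=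
    measure_union_null (volume_vline r) (volume_hline r)
  -- decomposition of D0
  have key : volume (diskAt r r r) =
      volume (diskAt r r r ∩ S) + volume (diskAt r r r ∩ T1) +
        volume (diskAt r r r ∩ T2) + volume (diskAt r r r ∩ T3) := by
    have hEq : diskAt r r r = (diskAt r r r ∩ S ∪ diskAt r r r ∩ T1 ∪ diskAt r r r ∩ T2)
        ∪ diskAt r r r ∩ T3 := by
      rw [← Set.inter_union_distrib_left, ← Set.inter_union_distrib_left,
        ← Set.inter_union_distrib_left]
      exact (Set.inter_eq_self_of_subset_left hcov).symm
    have hAB : AEDisjoint volume (diskAt r r r ∩ S) (diskAt r r r ∩ T1) := by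
      refine measure_mono_null ?_ (volume_vline r)
      rintro ⟨x, y⟩ ⟨⟨-, ⟨-, h2⟩, -⟩, -, ⟨h4, -⟩, -⟩
      simp only [Set.mem_setOf_eq]; linarith
    have hABC : AEDisjoint volume (diskAt r r r ∩ S ∪ diskAt r r r ∩ T1)
        (diskAt r r r ∩ T2) := by
      refine measure_mono_null ?_ (volume_hline r)
      rintro ⟨x, y⟩ ⟨h1, -, -, h2, -⟩
      rcases h1 with ⟨-, -, -, h3⟩ | ⟨-, -, -, h3⟩ <;>
        · simp only [Set.mem_setOf_eq]; linarith
    have hABCD : AEDisjoint volume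
        (diskAt r r r ∩ S ∪ diskAt r r r ∩ T1 ∪ diskAt r r r ∩ T2)
        (diskAt r r r ∩ T3) := by
      refine measure_mono_null ?_ hlines
      rintro ⟨x, y⟩ ⟨h1, -, ⟨-, hx⟩, hy, -⟩
      rcases h1 with (⟨-, -, -, h3⟩ | ⟨-, ⟨h4, -⟩, -⟩) | ⟨-, ⟨h4, -⟩, -⟩
      · exact Or.inr (by simp only [Set.mem_setOf_eq]; linarith)
      · exact Or.inl (by simp only [Set.mem_setOf_eq]; linarith)
      · exact Or.inl (by simp only [Set.mem_setOf_eq]; linarith)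
    conv_lhs => rw [hEq]
    rw [measure_union₀ (mD0.inter mT3).nullMeasurableSet hABCD,
      measure_union₀ (mD0.inter mT2).nullMeasurableSet hABC,
      measure_union₀ (mD0.inter mT1).nullMeasurableSet hAB]
  -- volume of S ∩ U
  have hSU : volume (S ∩ U) =
      volume (S ∩ diskAt (-r) r r) + volume (S ∩ diskAt (-r) (-r) r) +
        volume (S ∩ diskAt r (-r) r) := by
    rw [hU, Set.inter_union_distrib_left, Set.inter_union_distrib_left,
      measure_union (by
        exact (hd13.mono Set.inter_subset_right Set.inter_subset_right).union_left
          (hd23.mono Set.inter_subset_right Set.inter_subset_right)) (mS.inter mD3),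
      measure_union (hd12.mono Set.inter_subset_right Set.inter_subset_right)
        (mS.inter mD2)]
  -- hence volume (S ∩ U) + volume (D0 ∩ S) = volume D0
  have hkey2 : volume (diskAt r r r ∩ S) + volume (S ∩ U) = volume (diskAt r r r) := by
    rw [hSU, ht1, ht2, ht3, key]; ring
  -- splitting D0 and S
  have h1 : volume (diskAt r r r ∩ S) + volume (diskAt r r r \ S) = volume (diskAt r r r) :=
    measure_inter_add_diff _ mS
  have h2 : volume (S ∩ U) + volume (S \ U) = volume S := measure_inter_add_diff _ mU
  have hfin : volume (diskAt r r r ∩ S) ≠ ⊤ := by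
    refine ne_top_of_le_ne_top ?_ (measure_mono Set.inter_subset_right)
    rw [hvolS]; exact ENNReal.ofReal_ne_top
  have hdiff : volume (diskAt r r r \ S) = volume (S ∩ U) := by
    have := h1.trans hkey2.symm
    exact (ENNReal.add_right_inj hfin).mp this
  -- region decomposition
  have hreg : threeBulbRegion r = (diskAt r r r \ S) ∪ (S \ U) := by
    rw [threeBulbRegion, ← hS, ← hU]
    ext p
    constructor
    · rintro (hp | hp)
      · by_cases hpS : p ∈ S
        · refine Or.inr ⟨hpS, ?_⟩
          rintro ((h | h) | h)
          · exact hd01.le_bot ⟨hp, h⟩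
          · exact hd02.le_bot ⟨hp, h⟩
          · exact hd03.le_bot ⟨hp, h⟩
        · exact Or.inl ⟨hp, hpS⟩
      · exact Or.inr hp
    · rintro (⟨hp, -⟩ | hp)
      · exact Or.inl hp
      · exact Or.inr hp
  have hdisj : Disjoint (diskAt r r r \ S) (S \ U) := by
    rw [Set.disjoint_left]
    rintro p ⟨-, hp⟩ ⟨hp', -⟩
    exact hp hp'
  rw [hreg, measure_union hdisj (mS.diff mU), hdiff, h2, hvolS]
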